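/- Consider the general system with coefficients Γ_1, …, Γ_n ∈ ℂ \ {0} and C_0 ∈ ℂ \ {0}. If Σ_{j∈I} Γ_j ≠ 0 for every nonempty subset I ⊆ {1, …, n}, then the set of solutions (z_1, …, z_n) ∈ ℂ^n of the general system is finite. -/

import Mathlib

open Finset
noncomputable section GSAux
open Matrix MvPolynomial


lemma gs_vandermonde_zero {n m : ℕ} (hm : 1 ≤ m) (Γ : Fin n → ℂ)
    (h : ∀ I : Finset (Fin n), I.Nonempty → ∑ j ∈ I, Γ j ≠ 0)
    (u : Fin n → ℂ) (hu : ∀ k, k < n → ∑ j, Γ j * u j ^ (m + k) = 0) : u = 0 := by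
  by_contra hne
  -- set of nonzero values of u
  set T : Finset ℂ := (Finset.univ.image u).filter (fun w => w ≠ 0) with hT
  have hTne : T.Nonempty := by
    obtain ⟨j, hj⟩ : ∃ j, u j ≠ 0 := by
      by_contra hc; push_neg at hc; exact hne (funext hc)
    exact ⟨u j, by simp [hT, hj]⟩
  set d := T.card with hd
  have hd1 : 1 ≤ d := Finset.card_pos.2 hTne
  have hdn : d ≤ n := by
    calc d ≤ (Finset.univ.image u).card := Finset.card_filter_le _ _
    _ ≤ (Finset.univ : Finset (Fin n)).card := Finset.card_image_le
    _ = n := by simp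
  set v : Fin d → ℂ := fun l => ((T.equivFin.symm l : T) : ℂ) with hv
  have hvT : ∀ l, v l ∈ T := fun l => (T.equivFin.symm l).2
  have hvne : ∀ l, v l ≠ 0 := fun l => (Finset.mem_filter.1 (hvT l)).2
  have hvinj : Function.Injective v :=
    Subtype.val_injective.comp (T.equivFin.symm.injective)
  set c : Fin d → ℂ := fun l => ∑ j ∈ Finset.univ.filter (fun j => u j = v l), Γ j with hc
  have hcne : ∀ l, c l ≠ 0 := by
    intro l
    apply h
    obtain ⟨j, -, hj⟩ := Finset.mem_image.1 (Finset.mem_filter.1 (hvT l)).1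
    exact ⟨j, Finset.mem_filter.2 ⟨Finset.mem_univ _, hj⟩⟩
  have key : ∀ k : Fin d, ∑ l, c l * v l ^ (m + (k : ℕ)) = 0 := by
    intro k
    have h0 := hu k (lt_of_lt_of_le k.2 hdn)
    have hsplit : ∑ j ∈ Finset.univ.filter (fun j => u j ≠ 0), Γ j * u j ^ (m + (k : ℕ)) = 0 := by
      refine Eq.trans (Finset.sum_filter_of_ne ?_) h0
      intro j _ hj hj0
      exact hj (by rw [hj0, zero_pow (by omega : m + (k : ℕ) ≠ 0), mul_zero])
    have hfib := Finset.sum_fiberwise_of_maps_to (g := u)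
      (s := Finset.univ.filter (fun j => u j ≠ 0)) (t := T)
      (fun j hj => by
        simp only [hT, Finset.mem_filter, Finset.mem_image]
        exact ⟨⟨j, Finset.mem_univ _, rfl⟩, (Finset.mem_filter.1 hj).2⟩)
      (fun j => Γ j * u j ^ (m + (k : ℕ)))
    rw [hsplit] at hfib
    have hinner : ∀ w ∈ T,
        (∑ j ∈ (Finset.univ.filter (fun j => u j ≠ 0)).filter (fun j => u j = w),
          Γ j * u j ^ (m + (k : ℕ)))
        = (∑ j ∈ Finset.univ.filter (fun j => u j = w), Γ j) * w ^ (m + (k : ℕ)) := by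
      intro w hw
      have hw0 : w ≠ 0 := (Finset.mem_filter.1 hw).2
      rw [Finset.filter_filter]
      rw [Finset.sum_mul]
      apply Finset.sum_congr
      · apply Finset.filter_congr
        intro j _
        constructor
        · rintro ⟨-, h2⟩; exact h2
        · intro h2; exact ⟨by rw [h2]; exact hw0, h2⟩
      · intro j hj
        rw [(Finset.mem_filter.1 hj).2]
    rw [Finset.sum_congr rfl hinner] at hfib
    -- reindex over Fin d
    have hre : ∑ l, c l * v l ^ (m + (k : ℕ))
        = ∑ x : T, (∑ j ∈ Finset.univ.filter (fun j => u j = (x : ℂ)), Γ j) * (x : ℂ) ^ (m + (k : ℕ)) :=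
      Fintype.sum_equiv T.equivFin.symm _ _ (fun l => rfl)
    rw [hre, Finset.sum_coe_sort T
      (fun w => (∑ j ∈ Finset.univ.filter (fun j => u j = w), Γ j) * w ^ (m + (k : ℕ)))]
    exact hfib
  -- matrix argument
  set M : Matrix (Fin d) (Fin d) ℂ := fun k l => v l ^ (m + (k : ℕ)) with hM
  have hMc : M.mulVec c = 0 := by
    funext k
    simpa [hM, Matrix.mulVec, dotProduct, mul_comm] using key k
  have hdet : M.det ≠ 0 := by
    have hMeq : M = (Matrix.vandermonde v)ᵀ * Matrix.diagonal (fun l => v l ^ m) := by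
      ext k l
      rw [Matrix.mul_diagonal, Matrix.transpose_apply, Matrix.vandermonde_apply,
        ← pow_add, add_comm]
    rw [hMeq, Matrix.det_mul, Matrix.det_transpose, Matrix.det_vandermonde,
      Matrix.det_diagonal]
    apply mul_ne_zero
    · apply Finset.prod_ne_zero_iff.2
      intro i _
      apply Finset.prod_ne_zero_iff.2
      intro j hj
      have hij : i ≠ j := (Finset.mem_Ioi.1 hj).ne
      exact sub_ne_zero.2 fun hEq => hij (hvinj hEq.symm)
    · exact Finset.prod_ne_zero_iff.2 fun l _ => pow_ne_zero _ (hvne l)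
  have : c = 0 := by
    have hinj : Function.Injective M.mulVec :=
      Matrix.mulVec_injective_iff_isUnit.2 ((Matrix.isUnit_iff_isUnit_det M).2 (isUnit_iff_ne_zero.2 hdet))
    apply hinj
    rw [hMc, Matrix.mulVec_zero]
  exact hcne ⟨0, hd1⟩ (by rw [this]; rfl)

lemma gs_hc_mul {σ : Type*} {R : Type*} [CommRing R] (h F : MvPolynomial σ R) (d N : ℕ)
    (hF : F.IsHomogeneous d) (hd : d ≤ N) :
    homogeneousComponent N (h * F) = homogeneousComponent (N - d) h * F := by
  have hrep : h * F = ∑ i ∈ Finset.range (h.totalDegree + 1),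
      homogeneousComponent i h * F := by
    rw [← Finset.sum_mul, sum_homogeneousComponent]
  rw [hrep, map_sum]
  have hterm : ∀ i ∈ Finset.range (h.totalDegree + 1),
      homogeneousComponent N (homogeneousComponent i h * F)
        = if i = N - d then homogeneousComponent i h * F else 0 := by
    intro i _
    rw [homogeneousComponent_of_mem
      ((mem_homogeneousSubmodule _ _).2
        ((homogeneousComponent_isHomogeneous i h).mul hF))]
    by_cases hc : i = N - d
    · rw [if_pos (by omega), if_pos hc]
    · rw [if_neg (by omega), if_neg hc]
  rw [Finset.sum_congr rfl hterm, Finset.sum_ite_eq' (Finset.range (h.totalDegree + 1))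
    (N - d) (fun i => homogeneousComponent i h * F)]
  by_cases hmem : N - d ∈ Finset.range (h.totalDegree + 1)
  · rw [if_pos hmem]
  · rw [if_neg hmem, homogeneousComponent_eq_zero _ _
      (by rw [Finset.mem_range] at hmem; omega), zero_mul]

/-- top homogeneous part of equation `k` -/
def gsF (n m : ℕ) (Γ : Fin n → ℂ) (k : ℕ) : MvPolynomial (Fin n) ℂ :=
  ∑ j, MvPolynomial.C (Γ j) * X j ^ (m + k)

/-- lower order part of equation `k` -/
def gsL (n m : ℕ) (C0 : ℂ) (A : ℕ → ℕ → Fin n → ℂ) (Cv : ℕ → Fin n → ℂ)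
    (Cc : ℕ → ℕ → ℕ → Fin n → Fin n → ℂ) (k : ℕ) : MvPolynomial (Fin n) ℂ :=
  (∑ j, ∑ r ∈ Finset.range m, MvPolynomial.C (A k r j) * X j ^ (r + k))
  + (if k = 1 then MvPolynomial.C C0 else 0)
  + (if 2 ≤ k then
      (∑ j, MvPolynomial.C (Cv k j) * X j ^ (k - 1))
      + ∑ i, ∑ j, (if i < j then
          ∑ p ∈ Finset.HasAntidiagonal.antidiagonal (k - 1),
            (if p.1 ≠ 0 ∧ p.2 ≠ 0 then
              MvPolynomial.C (Cc k p.1 p.2 i j) * X i ^ p.1 * X j ^ p.2 else 0)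
        else 0)
    else 0)

lemma gsF_homog (n m : ℕ) (Γ : Fin n → ℂ) (k : ℕ) :
    (gsF n m Γ k).IsHomogeneous (m + k) :=
  IsHomogeneous.sum _ _ _ fun j _ => isHomogeneous_C_mul_X_pow _ _ _

lemma gsL_deg {n : ℕ} (m : ℕ) (hm : 1 ≤ m) (C0 : ℂ) (A : ℕ → ℕ → Fin n → ℂ)
    (Cv : ℕ → Fin n → ℂ) (Cc : ℕ → ℕ → ℕ → Fin n → Fin n → ℂ) (k : ℕ) :
    (gsL n m C0 A Cv Cc k).totalDegree ≤ m + k - 1 := by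
  have hCX : ∀ (a : ℂ) (j : Fin n) (e : ℕ),
      (MvPolynomial.C a * X j ^ e).totalDegree ≤ e := fun a j e =>
    (totalDegree_mul _ _).trans (by simp)
  refine le_trans (totalDegree_add _ _) (max_le (le_trans (totalDegree_add _ _) (max_le ?_ ?_)) ?_)
  · refine (totalDegree_finset_sum _ _).trans (Finset.sup_le fun j _ => ?_)
    refine (totalDegree_finset_sum _ _).trans (Finset.sup_le fun r hr => ?_)
    have := hCX (A k r j) j (r + k)
    have hrm := Finset.mem_range.1 hr
    omega
  · split_ifs with h1
    · simp
    · simp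
  · split_ifs with h2
    · refine le_trans (totalDegree_add _ _) (max_le ?_ ?_)
      · refine (totalDegree_finset_sum _ _).trans (Finset.sup_le fun j _ => ?_)
        have := hCX (Cv k j) j (k - 1)
        omega
      · refine (totalDegree_finset_sum _ _).trans (Finset.sup_le fun i _ => ?_)
        refine (totalDegree_finset_sum _ _).trans (Finset.sup_le fun j _ => ?_)
        split_ifs with hij
        · refine (totalDegree_finset_sum _ _).trans (Finset.sup_le fun p hp => ?_)
          split_ifs with hp0
          · have hps := Finset.HasAntidiagonal.mem_antidiagonal.1 hp
            have h3 : (MvPolynomial.C (Cc k p.1 p.2 i j) * X i ^ p.1 * X j ^ p.2).totalDegree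
                ≤ p.1 + p.2 :=
              (totalDegree_mul _ _).trans (add_le_add (hCX _ _ _) (by simp))
            omega
          · simp
        · simp
    · simp

lemma gs_exists_rep {n : ℕ} (m : ℕ) (hm : 1 ≤ m) (Γ : Fin n → ℂ)
    (h : ∀ I : Finset (Fin n), I.Nonempty → ∑ j ∈ I, Γ j ≠ 0)
    (C0 : ℂ) (A : ℕ → ℕ → Fin n → ℂ) (Cv : ℕ → Fin n → ℂ)
    (Cc : ℕ → ℕ → ℕ → Fin n → Fin n → ℂ) (j : Fin n) :
    ∃ (N : ℕ) (r : MvPolynomial (Fin n) ℂ), 1 ≤ N ∧ r.totalDegree < N ∧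
      (X j : MvPolynomial (Fin n) ℂ) ^ N - r ∈
        Ideal.span (Set.range fun k : Fin n =>
          gsF n m Γ (k : ℕ) + gsL n m C0 A Cv Cc (k : ℕ)) := by
  set IF : Ideal (MvPolynomial (Fin n) ℂ) :=
    Ideal.span (Set.range fun k : Fin n => gsF n m Γ (k : ℕ)) with hIF
  have hrad : (X j : MvPolynomial (Fin n) ℂ) ∈ IF.radical := by
    rw [← vanishingIdeal_zeroLocus_eq_radical (K := ℂ), mem_vanishingIdeal_iff]
    intro x hx
    have hx0 : x = 0 := by
      refine gs_vandermonde_zero hm Γ h x fun k hk => ?_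
      have hmem : gsF n m Γ k ∈ IF := by
        rw [hIF]
        exact Ideal.subset_span ⟨(⟨k, hk⟩ : Fin n), rfl⟩
      have := (mem_zeroLocus_iff.1 hx) _ hmem
      simpa [gsF] using this
    simp [hx0]
  obtain ⟨N0, hN0⟩ := hrad
  set N := N0 + (m + n) with hN
  have hXN : (X j : MvPolynomial (Fin n) ℂ) ^ N ∈ IF := by
    rw [hN, pow_add]; exact Ideal.mul_mem_right _ _ hN0
  obtain ⟨c, hc⟩ := Finsupp.mem_span_range_iff_exists_finsupp.1 hXN
  have hc' : (X j : MvPolynomial (Fin n) ℂ) ^ N = ∑ k : Fin n, c k * gsF n m Γ (k : ℕ) := by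
    have e1 : (c.sum fun i a => a • gsF n m Γ (i : ℕ))
        = ∑ k : Fin n, c k • gsF n m Γ (k : ℕ) :=
      Finsupp.sum_fintype _ _ (fun i => zero_smul _ _)
    rw [e1] at hc
    rw [← hc]
    simp [smul_eq_mul]
  set h' : Fin n → MvPolynomial (Fin n) ℂ :=
    fun k => homogeneousComponent (N - (m + (k : ℕ))) (c k) with hh'
  have hrep : (X j : MvPolynomial (Fin n) ℂ) ^ N
      = ∑ k : Fin n, h' k * gsF n m Γ (k : ℕ) := by
    have h1 : homogeneousComponent N ((X j : MvPolynomial (Fin n) ℂ) ^ N) = (X j) ^ N := by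
      rw [homogeneousComponent_of_mem
        ((mem_homogeneousSubmodule _ _).2 (isHomogeneous_X_pow _ _)), if_pos rfl]
    calc (X j : MvPolynomial (Fin n) ℂ) ^ N
        = homogeneousComponent N ((X j : MvPolynomial (Fin n) ℂ) ^ N) := h1.symm
      _ = homogeneousComponent N (∑ k : Fin n, c k * gsF n m Γ (k : ℕ)) := by rw [← hc']
      _ = ∑ k : Fin n, homogeneousComponent N (c k * gsF n m Γ (k : ℕ)) := map_sum _ _ _
      _ = ∑ k : Fin n, h' k * gsF n m Γ (k : ℕ) :=
          Finset.sum_congr rfl fun k _ =>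
            gs_hc_mul _ _ _ _ (gsF_homog n m Γ (k : ℕ)) (by have := k.isLt; omega)
  refine ⟨N, -(∑ k : Fin n, h' k * gsL n m C0 A Cv Cc (k : ℕ)), by omega, ?_, ?_⟩
  · rw [totalDegree_neg]
    have hle : (∑ k : Fin n, h' k * gsL n m C0 A Cv Cc (k : ℕ)).totalDegree ≤ N - 1 := by
      refine (totalDegree_finset_sum _ _).trans (Finset.sup_le fun k _ => ?_)
      refine (totalDegree_mul _ _).trans ?_
      have h1 : (h' k).totalDegree ≤ N - (m + (k : ℕ)) :=
        (homogeneousComponent_isHomogeneous _ _).totalDegree_le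
      have h2 := gsL_deg m hm C0 A Cv Cc (k : ℕ)
      have hk := k.isLt
      omega
    omega
  · have heq : (X j : MvPolynomial (Fin n) ℂ) ^ N
        - (-(∑ k : Fin n, h' k * gsL n m C0 A Cv Cc (k : ℕ)))
        = ∑ k : Fin n, h' k * (gsF n m Γ (k : ℕ) + gsL n m C0 A Cv Cc (k : ℕ)) := by
      rw [sub_neg_eq_add]
      conv_lhs => rw [hrep]
      rw [← Finset.sum_add_distrib]
      exact Finset.sum_congr rfl fun k _ => (mul_add _ _ _).symm
    rw [heq]
    exact Ideal.sum_mem _ fun k _ => Ideal.mul_mem_left _ _ (Ideal.subset_span ⟨k, rfl⟩)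

lemma gs_reduce {n : ℕ} (J : Ideal (MvPolynomial (Fin n) ℂ))
    (Nf : Fin n → ℕ) (rf : Fin n → MvPolynomial (Fin n) ℂ)
    (hNf : ∀ j, 1 ≤ Nf j) (hrf : ∀ j, (rf j).totalDegree < Nf j)
    (hmem : ∀ j, (X j : MvPolynomial (Fin n) ℂ) ^ (Nf j) - rf j ∈ J) :
    ∀ p : MvPolynomial (Fin n) ℂ, ∃ w, w.totalDegree ≤ ∑ j, (Nf j - 1) ∧ p - w ∈ J := by
  set B := ∑ j, (Nf j - 1) with hB
  suffices H : ∀ D (p : MvPolynomial (Fin n) ℂ), p.totalDegree ≤ D →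
      ∃ w, w.totalDegree ≤ B ∧ p - w ∈ J by
    exact fun p => H p.totalDegree p le_rfl
  intro D
  induction D using Nat.strong_induction_on with
  | _ D IH =>
    intro p hp
    by_cases hpB : p.totalDegree ≤ B
    · exact ⟨p, hpB, by rw [sub_self]; exact J.zero_mem⟩
    push_neg at hpB
    have hD1 : 1 ≤ D := le_trans (by omega) hp
    have hkey : ∀ d ∈ p.support, ∃ w : MvPolynomial (Fin n) ℂ,
        w.totalDegree ≤ D - 1 ∧ (monomial d (coeff d p) - w ∈ J) := by
      intro d hd
      have hdsum : (∑ i, d i) ≤ D := by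
        have h1 : (d.sum fun _ e => e) ≤ p.totalDegree := le_totalDegree hd
        rw [Finsupp.sum_fintype _ _ (fun i => rfl)] at h1
        omega
      by_cases hsb : (∑ i, d i) ≤ B
      · refine ⟨monomial d (coeff d p), ?_, by rw [sub_self]; exact J.zero_mem⟩
        refine le_trans (totalDegree_monomial_le _ _) ?_
        rw [Finsupp.sum_fintype _ _ (fun i => rfl)]
        simp only [id]
        omega
      · push_neg at hsb
        have hex : ∃ j, Nf j ≤ d j := by
          by_contra hcon
          push_neg at hcon
          have hle : (∑ i, d i) ≤ ∑ i, (Nf i - 1) :=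
            Finset.sum_le_sum fun i _ => by have := hcon i; omega
          omega
        obtain ⟨j, hj⟩ := hex
        set d' : Fin n →₀ ℕ := d - Finsupp.single j (Nf j) with hd'
        have hsingle_le : Finsupp.single j (Nf j) ≤ d := Finsupp.single_le_iff.2 hj
        have hdd : Finsupp.single j (Nf j) + d' = d := by
          rw [hd']; exact add_tsub_cancel_of_le hsingle_le
        have hmono : monomial d (coeff d p)
            = (X j : MvPolynomial (Fin n) ℂ) ^ (Nf j) * monomial d' (coeff d p) := by
          rw [X_pow_eq_monomial, monomial_mul, one_mul, hdd]
        have hsing : (∑ i, (Finsupp.single j (Nf j)) i) = Nf j := by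
          rw [Finset.sum_eq_single j (fun i _ hi => by
            rw [Finsupp.single_apply, if_neg (by exact fun hEq => hi (hEq ▸ rfl))])
            (fun hni => absurd (Finset.mem_univ j) hni)]
          simp
        have hd'sum : (∑ i, d' i) = (∑ i, d i) - Nf j := by
          have hcg := congrArg (fun f : Fin n →₀ ℕ => ∑ i, f i) hdd
          simp only [Finsupp.add_apply] at hcg
          rw [Finset.sum_add_distrib, hsing] at hcg
          omega
        refine ⟨rf j * monomial d' (coeff d p), ?_, ?_⟩
        · refine (totalDegree_mul _ _).trans ?_
          have h1 : (rf j).totalDegree < Nf j := hrf j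
          have h2 : (monomial d' (coeff d p)).totalDegree ≤ ∑ i, d' i := by
            refine le_trans (totalDegree_monomial_le _ _) ?_
            rw [Finsupp.sum_fintype _ _ (fun i => rfl)]
            simp only [id]
            exact le_rfl
          have h3 : Nf j ≤ ∑ i, d i :=
            le_trans hj (Finset.single_le_sum (fun i _ => Nat.zero_le _) (Finset.mem_univ j))
          omega
        · rw [hmono, ← sub_mul]
          exact Ideal.mul_mem_right _ _ (hmem j)
    choose g hg1 hg2 using hkey
    set q := ∑ d ∈ p.support.attach, g d.1 d.2 with hq
    have hpq : p - q ∈ J := by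
      have hps : p = ∑ d ∈ p.support.attach, monomial d.1 (coeff d.1 p) := by
        conv_lhs => rw [as_sum p]
        rw [← Finset.sum_attach p.support (fun d => monomial d (coeff d p))]
      rw [hps, hq, ← Finset.sum_sub_distrib]
      exact Submodule.sum_mem _ fun d _ => hg2 d.1 d.2
    have hqdeg : q.totalDegree ≤ D - 1 :=
      (totalDegree_finset_sum _ _).trans (Finset.sup_le fun d _ => hg1 d.1 d.2)
    obtain ⟨w, hw1, hw2⟩ := IH (D - 1) (by omega) q hqdeg
    refine ⟨w, hw1, ?_⟩
    have hsplit : p - w = (p - q) + (q - w) := by ring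
    rw [hsplit]
    exact J.add_mem hpq hw2

lemma gs_quot_finite {n : ℕ} (J : Ideal (MvPolynomial (Fin n) ℂ)) (B : ℕ)
    (hred : ∀ p : MvPolynomial (Fin n) ℂ, ∃ w, w.totalDegree ≤ B ∧ p - w ∈ J) :
    Module.Finite ℂ (MvPolynomial (Fin n) ℂ ⧸ J) := by
  have hsurj : Function.Surjective
      ((Ideal.Quotient.mkₐ ℂ J).toLinearMap.comp
        (restrictTotalDegree (Fin n) ℂ B).subtype) := by
    intro y
    obtain ⟨p, rfl⟩ := Ideal.Quotient.mk_surjective y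
    obtain ⟨w, hw1, hw2⟩ := hred p
    refine ⟨⟨w, (mem_restrictTotalDegree _ _ w).2 hw1⟩, ?_⟩
    simp only [LinearMap.comp_apply, Submodule.subtype_apply, AlgHom.toLinearMap_apply,
      Ideal.Quotient.mkₐ_eq_mk]
    rw [Ideal.Quotient.mk_eq_mk_iff_sub_mem]
    have : w - p = -(p - w) := by ring
    rw [this]
    exact J.neg_mem hw2
  exact Module.Finite.of_surjective _ hsurj

lemma gs_univariate {n : ℕ} (J : Ideal (MvPolynomial (Fin n) ℂ))
    (hfin : Module.Finite ℂ (MvPolynomial (Fin n) ℂ ⧸ J)) (j : Fin n) :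
    ∃ q : Polynomial ℂ, q ≠ 0 ∧ Polynomial.aeval (X j : MvPolynomial (Fin n) ℂ) q ∈ J := by
  haveI := hfin
  obtain ⟨q, hqm, hq0⟩ := IsIntegral.of_finite ℂ (Ideal.Quotient.mk J (X j))
  refine ⟨q, hqm.ne_zero, ?_⟩
  rw [← Ideal.Quotient.eq_zero_iff_mem]
  have h2 := Polynomial.aeval_algHom_apply (Ideal.Quotient.mkₐ ℂ J) (X j) q
  rw [Ideal.Quotient.mkₐ_eq_mk] at h2
  rw [← h2, Polynomial.aeval_def]
  exact hq0

end GSAux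



/-- The general system of Section 4.1.  The equation index `k` is 0-based,
corresponding to the paper's equation `k+1`: equation `k` reads
`Σ_j Γ_j z_j^{m+k} + Σ_j Σ_{r<m} A^{k,r}_j z_j^{r+k} + [k = 1] C₀
  + [k ≥ 2] (Σ_j C^k_j z_j^{k−1} + Σ_{r+s=k−1, r,s≥1, i<j} C^{k,r,s}_{i,j} z_i^r z_j^s) = 0`. -/
def GeneralSystem (n m : ℕ) (Γ : Fin n → ℂ) (C0 : ℂ)
    (A : ℕ → ℕ → Fin n → ℂ) (C : ℕ → Fin n → ℂ)
    (Cc : ℕ → ℕ → ℕ → Fin n → Fin n → ℂ) (z : Fin n → ℂ) : Prop :=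
  ∀ k ∈ Finset.range n,
    (∑ j, Γ j * z j ^ (m + k))
    + (∑ j, ∑ r ∈ Finset.range m, A k r j * z j ^ (r + k))
    + (if k = 1 then C0 else 0)
    + (if 2 ≤ k then
        (∑ j, C k j * z j ^ (k - 1))
        + ∑ i, ∑ j, if i < j then
            ∑ p ∈ Finset.HasAntidiagonal.antidiagonal (k - 1),
              (if p.1 ≠ 0 ∧ p.2 ≠ 0 then
                Cc k p.1 p.2 i j * z i ^ p.1 * z j ^ p.2 else 0)
          else 0
      else 0) = 0

/-- if all `Γ_j ≠ 0`, `C₀ ≠ 0` and every nonempty subset of the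
`Γ_j` has nonzero sum, then the general system has only finitely many solutions
in `ℂ^n`. -/
theorem general_system_finite
    (n : ℕ) (hn : 2 ≤ n) (m : ℕ) (hm : 1 ≤ m)
    (Γ : Fin n → ℂ) (hΓ : ∀ j, Γ j ≠ 0) (C0 : ℂ) (hC0 : C0 ≠ 0)
    (A : ℕ → ℕ → Fin n → ℂ) (C : ℕ → Fin n → ℂ)
    (Cc : ℕ → ℕ → ℕ → Fin n → Fin n → ℂ)
    (h : ∀ I : Finset (Fin n), I.Nonempty → ∑ j ∈ I, Γ j ≠ 0) :
    {z : Fin n → ℂ | GeneralSystem n m Γ C0 A C Cc z}.Finite := by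
  classical
  choose Nf rf hNf hrf hmem using fun j : Fin n => gs_exists_rep m hm Γ h C0 A C Cc j
  set J : Ideal (MvPolynomial (Fin n) ℂ) :=
    Ideal.span (Set.range fun k : Fin n =>
      gsF n m Γ (k : ℕ) + gsL n m C0 A C Cc (k : ℕ)) with hJ
  have hred := gs_reduce J Nf rf hNf hrf hmem
  have hfin := gs_quot_finite J _ hred
  choose q hq0 hqJ using fun j : Fin n => gs_univariate J hfin j
  refine Set.Finite.subset
    (Set.Finite.pi (fun j : Fin n => Polynomial.finite_setOf_isRoot (hq0 j))) ?_
  intro z hz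
  have hker : ∀ k : Fin n,
      (MvPolynomial.aeval z) (gsF n m Γ (k : ℕ) + gsL n m C0 A C Cc (k : ℕ)) = 0 := by
    intro k
    have hzk := hz (k : ℕ) (Finset.mem_range.2 k.isLt)
    have e1 : (MvPolynomial.aeval z) (gsF n m Γ (k : ℕ))
        = ∑ j, Γ j * z j ^ (m + (k : ℕ)) := by
      simp [gsF]
    have e2 : (MvPolynomial.aeval z) (gsL n m C0 A C Cc (k : ℕ))
        = (∑ j, ∑ r ∈ Finset.range m, A (k : ℕ) r j * z j ^ (r + (k : ℕ)))
          + (if (k : ℕ) = 1 then C0 else 0)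
          + (if 2 ≤ (k : ℕ) then
              (∑ j, C (k : ℕ) j * z j ^ ((k : ℕ) - 1))
              + ∑ i, ∑ j, if i < j then
                  ∑ p ∈ Finset.HasAntidiagonal.antidiagonal ((k : ℕ) - 1),
                    (if p.1 ≠ 0 ∧ p.2 ≠ 0 then
                      Cc (k : ℕ) p.1 p.2 i j * z i ^ p.1 * z j ^ p.2 else 0)
                else 0
            else 0) := by
      simp [gsL, apply_ite (MvPolynomial.aeval z), apply_ite (MvPolynomial.eval z)]
    rw [map_add, e1, e2]
    simp only [add_assoc] at hzk ⊢
    exact hzk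
  have hJker : ∀ p ∈ J, (MvPolynomial.aeval z) p = 0 := by
    intro p hp
    have hle : J ≤ RingHom.ker (MvPolynomial.aeval z : MvPolynomial (Fin n) ℂ →ₐ[ℂ] ℂ) := by
      rw [hJ, Ideal.span_le]
      rintro p' ⟨k, rfl⟩
      exact hker k
    exact hle hp
  rw [Set.mem_pi]
  intro j _
  have h1 : (MvPolynomial.aeval z) (Polynomial.aeval (MvPolynomial.X j : MvPolynomial (Fin n) ℂ) (q j)) = 0 :=
    hJker _ (hqJ j)
  have h2 := Polynomial.aeval_algHom_apply (MvPolynomial.aeval z) (MvPolynomial.X j : MvPolynomial (Fin n) ℂ) (q j)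
  rw [MvPolynomial.aeval_X] at h2
  have h3 : Polynomial.aeval (z j) (q j) = 0 := h2.trans h1
  rw [Polynomial.coe_aeval_eq_eval] at h3
  exact h3
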